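/- Each pair of distinct chords of the (2n+1)-star, i.e., chords joining vertex k to vertex k+n mod (2n+1), intersect in the interior of the disk if and only if their endpoint pairs interleave on the circle; counting such interleaved pairs gives (n-1)(2n+1)/1 crossings, i.e., the number of pairs (i, j), 0 ≤ i < j ≤ 2n, such that the cyclic pairs {i, i+n} and {j, j+n} (mod 2n+1) interleave on Z/(2n+1) equals (n-1)(2n+1). -/

import Mathlib

open Complex Real

/-- The `k`-th vertex of the `(2n+1)`-star. -/
noncomputable def starVertex (n k : ℕ) : ℂ :=
  Complex.exp (2 * Real.pi * Complex.I * k / (2 * n + 1))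

/-- `x` lies on the (open) cyclic arc from `a` to `b` in `ZMod m`. -/
def arcMem (m : ℕ) (a x b : ZMod m) : Prop :=
  0 < (x - a).val ∧ (x - a).val < (b - a).val

/-- The pairs `{a,b}` and `{c,d}` interleave on the cyclic order `ZMod m`:
exactly one of `c`, `d` lies on the cyclic arc from `a` to `b`. -/
def interleave (m : ℕ) (a b c d : ZMod m) : Prop :=
  Xor' (arcMem m a c b) (arcMem m a d b)

noncomputable def cross (u v : ℂ) : ℝ := u.re * v.im - u.im * v.re

lemma ratio_mem_aux {a b : ℝ} (ha : 0 < a) (hb : b < 0) : 0 < a/(a-b) ∧ a/(a-b) < 1 := by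
  have h : 0 < a - b := by linarith
  exact ⟨div_pos ha h, (div_lt_one h).mpr (by linarith)⟩

lemma ratio_mem {a b : ℝ} (hab : a * b < 0) : 0 < a / (a - b) ∧ a / (a - b) < 1 := by
  rcases mul_neg_iff.mp hab with ⟨ha, hb⟩ | ⟨ha, hb⟩
  · exact ratio_mem_aux ha hb
  · have h := ratio_mem_aux (a := -a) (b := -b) (by linarith) (by linarith)
    have e : -a / (-a - -b) = a / (a - b) := by
      rw [show -a - -b = -(a-b) by ring, neg_div_neg_eq]
    rwa [e] at h

lemma seg_inter_nonempty {A B C D : ℂ}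
    (h1 : cross (B - A) (C - A) * cross (B - A) (D - A) < 0)
    (h2 : cross (D - C) (A - C) * cross (D - C) (B - C) < 0) :
    (openSegment ℝ A B ∩ openSegment ℝ C D).Nonempty := by
  have hX : cross (B - A) (D - C) ≠ 0 := by
    intro h
    have hEq : cross (B - A) (D - A) = cross (B - A) (C - A) := by
      have e : cross (B - A) (D - A) = cross (B - A) (C - A) + cross (B - A) (D - C) := by
        simp only [cross, Complex.sub_re, Complex.sub_im]; ring
      rw [e, h, add_zero]
    rw [hEq] at h1
    nlinarith [sq_nonneg (cross (B - A) (C - A))]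
  have fa : cross (B - A) (D - C) = cross (D - C) (A - C) - cross (D - C) (B - C) := by
    simp only [cross, Complex.sub_re, Complex.sub_im]; ring
  have fb : cross (B - A) (D - C) =
      (-(cross (B - A) (C - A))) - (-(cross (B - A) (D - A))) := by
    simp only [cross, Complex.sub_re, Complex.sub_im]; ring
  set X := cross (B - A) (D - C) with hXdef
  set p := cross (D - C) (A - C) with hpdef
  set q := -(cross (B - A) (C - A)) with hqdef
  have ht : 0 < p / X ∧ p / X < 1 := by
    have h := ratio_mem h2; rwa [← fa] at h
  have hs : 0 < q / X ∧ q / X < 1 := by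
    have h' : q * (-(cross (B - A) (D - A))) < 0 := by rw [hqdef]; nlinarith
    have h := ratio_mem h'; rwa [← fb] at h
  have key : (X - p) • A + p • B = (X - q) • C + q • D := by
    apply Complex.ext <;>
      · simp only [Complex.add_re, Complex.add_im, Complex.smul_re, Complex.smul_im,
          smul_eq_mul, hXdef, hpdef, hqdef, cross, Complex.sub_re, Complex.sub_im]
        ring
  have final : (1 - p / X) • A + (p / X) • B = (1 - q / X) • C + (q / X) • D := by
    have h := congrArg (fun z => (X⁻¹ : ℝ) • z) key
    simp only [smul_add, smul_smul] at h
    have e1 : X⁻¹ * (X - p) = 1 - p / X := by field_simp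
    have e2 : X⁻¹ * p = p / X := by field_simp
    have e3 : X⁻¹ * (X - q) = 1 - q / X := by field_simp
    have e4 : X⁻¹ * q = q / X := by field_simp
    rw [e1, e2, e3, e4] at h
    exact h
  exact ⟨(1 - p / X) • A + (p / X) • B,
    ⟨1 - p / X, p / X, by linarith [ht.2], ht.1, by ring, rfl⟩,
    ⟨1 - q / X, q / X, by linarith [hs.2], hs.1, by ring, final.symm ▸ rfl⟩⟩


lemma openSegment_mem {A B P : ℂ} (h : P ∈ openSegment ℝ A B) :
    ∃ t : ℝ, 0 < t ∧ t < 1 ∧ P - B = (1 - t) • (A - B) ∧ P - A = t • (B - A) := by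
  obtain ⟨a, b, ha, hb, hab, hP⟩ := h
  refine ⟨b, hb, by linarith, ?_, ?_⟩
  · rw [← hP, show a = 1 - b by linarith]
    apply Complex.ext <;>
      simp [Complex.smul_re, Complex.smul_im, Complex.sub_re, Complex.sub_im] <;> ring
  · rw [← hP, show a = 1 - b by linarith]
    apply Complex.ext <;>
      simp [Complex.smul_re, Complex.smul_im, Complex.sub_re, Complex.sub_im] <;> ring

lemma cross_smul_right (r : ℝ) (u v : ℂ) : cross u (r • v) = r * cross u v := by
  simp [cross, Complex.smul_re, Complex.smul_im]; ring

-- chords sharing endpoint B = C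
lemma seg_inter_empty₁ {A B D : ℂ} (h : cross (B - A) (D - B) ≠ 0) :
    openSegment ℝ A B ∩ openSegment ℝ B D = ∅ := by
  rw [Set.eq_empty_iff_forall_notMem]
  rintro P ⟨hP1, hP2⟩
  obtain ⟨t, ht0, ht1, htB, -⟩ := openSegment_mem hP1
  obtain ⟨s, hs0, hs1, -, hsB⟩ := openSegment_mem hP2
  have e1 : cross (B - A) (P - B) = (1 - t) * cross (B - A) (A - B) := by
    rw [htB, cross_smul_right]
  have e2 : cross (B - A) (P - B) = s * cross (B - A) (D - B) := by
    rw [hsB, cross_smul_right]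
  have e3 : cross (B - A) (A - B) = 0 := by
    simp [cross, Complex.sub_re, Complex.sub_im]; ring
  rw [e3, mul_zero] at e1
  rw [e1] at e2
  have : cross (B - A) (D - B) = 0 := by
    rcases mul_eq_zero.mp e2.symm with h' | h'
    · linarith
    · exact h'
  exact h this

-- chords sharing endpoint A = D  (second chord is C --- A)
lemma seg_inter_empty₂ {A B C : ℂ} (h : cross (B - A) (C - A) ≠ 0) :
    openSegment ℝ A B ∩ openSegment ℝ C A = ∅ := by
  rw [Set.eq_empty_iff_forall_notMem]
  rintro P ⟨hP1, hP2⟩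
  obtain ⟨t, ht0, ht1, -, htA⟩ := openSegment_mem hP1
  obtain ⟨s, hs0, hs1, hsA, -⟩ := openSegment_mem hP2
  have e1 : cross (B - A) (P - A) = t * cross (B - A) (B - A) := by
    rw [htA, cross_smul_right]
  have e2 : cross (B - A) (P - A) = (1 - s) * cross (B - A) (C - A) := by
    rw [hsA, cross_smul_right]
  have e3 : cross (B - A) (B - A) = 0 := by
    simp [cross]; ring
  rw [e3, mul_zero] at e1
  rw [e1] at e2
  have : cross (B - A) (C - A) = 0 := by
    rcases mul_eq_zero.mp e2.symm with h' | h'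
    · linarith
    · exact h'
  exact h this



noncomputable def V (m : ℕ) (j : ℤ) : ℂ := Complex.exp (2 * Real.pi * Complex.I * j / m)

lemma starVertex_eq (n k : ℕ) : starVertex n k = V (2 * n + 1) k := by
  unfold starVertex V
  congr 1
  push_cast
  ring

lemma V_add_int_mul (m : ℕ) (hm : 0 < m) (j t : ℤ) : V m (j + t * m) = V m j := by
  unfold V
  have hm' : (m : ℂ) ≠ 0 := by exact_mod_cast hm.ne'
  push_cast
  rw [show (2 * (Real.pi:ℂ) * Complex.I * (j + t * m) / m : ℂ)
      = 2 * (Real.pi:ℂ) * Complex.I * j / m + t * (2 * (Real.pi:ℂ) * Complex.I) by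
    field_simp]
  rw [Complex.exp_add, Complex.exp_int_mul_two_pi_mul_I, mul_one]

lemma V_sub_eq (m : ℕ) (hm : 0 < m) (a b : ℤ) :
    V m b - V m a = (2 * Real.sin (π * ((b:ℝ) - (a:ℝ)) / m)) •
      (Complex.I * Complex.exp ((↑(π * ((a:ℝ) + (b:ℝ)) / m) : ℂ) * Complex.I)) := by
  have hm' : (m : ℂ) ≠ 0 := by exact_mod_cast hm.ne'
  have e1 : (2 * (Real.pi:ℂ) * Complex.I * b / m : ℂ)
      = (↑(π * ((a:ℝ) + (b:ℝ)) / m) : ℂ) * Complex.I + (↑(π * ((b:ℝ) - (a:ℝ)) / m) : ℂ) * Complex.I := by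
    push_cast
    field_simp
    ring
  have e2 : (2 * (Real.pi:ℂ) * Complex.I * a / m : ℂ)
      = (↑(π * ((a:ℝ) + (b:ℝ)) / m) : ℂ) * Complex.I + (-(↑(π * ((b:ℝ) - (a:ℝ)) / m) : ℂ)) * Complex.I := by
    push_cast
    field_simp
    ring
  unfold V
  rw [e1, e2, Complex.exp_add, Complex.exp_add, Complex.real_smul, Complex.ofReal_mul,
    Complex.ofReal_sin, Complex.sin, Complex.ofReal_ofNat]
  linear_combination (Complex.exp ((↑(π * ((a:ℝ) + (b:ℝ)) / m) : ℂ) * Complex.I) *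
    (Complex.exp ((↑(π * ((b:ℝ) - (a:ℝ)) / m) : ℂ) * Complex.I) -
     Complex.exp ((-(↑(π * ((b:ℝ) - (a:ℝ)) / m) : ℂ)) * Complex.I))) * Complex.I_mul_I

lemma cross_smul_left (r : ℝ) (u v : ℂ) : cross (r • u) v = r * cross u v := by
  simp [cross, Complex.smul_re, Complex.smul_im]; ring


lemma cross_Ie (φ ψ : ℝ) :
    cross (Complex.I * Complex.exp ((φ:ℂ) * Complex.I))
          (Complex.I * Complex.exp ((ψ:ℂ) * Complex.I)) = Real.sin (ψ - φ) := by
  simp only [cross, Complex.mul_re, Complex.mul_im, Complex.I_re, Complex.I_im,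
    Complex.exp_ofReal_mul_I_re, Complex.exp_ofReal_mul_I_im, Real.sin_sub]
  ring

lemma crossV (m : ℕ) (hm : 0 < m) (a b c d : ℤ) :
    cross (V m b - V m a) (V m d - V m c) =
      4 * Real.sin (π * ((b:ℝ) - (a:ℝ)) / m) * Real.sin (π * ((d:ℝ) - (c:ℝ)) / m) *
        Real.sin (π * ((c:ℝ) + (d:ℝ) - (a:ℝ) - (b:ℝ)) / m) := by
  rw [V_sub_eq m hm a b, V_sub_eq m hm c d, cross_smul_left, cross_smul_right, cross_Ie]
  rw [show π * ((c:ℝ) + (d:ℝ)) / m - π * ((a:ℝ) + (b:ℝ)) / m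
      = π * ((c:ℝ) + (d:ℝ) - (a:ℝ) - (b:ℝ)) / m by ring]
  ring

lemma sin_pos_of (m : ℕ) (x : ℝ) (h0 : 0 < x) (h1 : x < m) : 0 < Real.sin (π * x / m) := by
  have hm : (0:ℝ) < m := lt_trans h0 h1
  apply Real.sin_pos_of_pos_of_lt_pi
  · positivity
  · rw [div_lt_iff₀ hm]
    nlinarith [Real.pi_pos]

lemma sin_neg_of (m : ℕ) (x : ℝ) (h0 : -(m:ℝ) < x) (h1 : x < 0) : Real.sin (π * x / m) < 0 := by
  have h := sin_pos_of m (-x) (by linarith) (by linarith)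
  rw [show π * x / m = -(π * (-x) / m) by ring, Real.sin_neg]
  linarith

lemma sin_neg_of' (m : ℕ) (x : ℝ) (h0 : (m:ℝ) < x) (h1 : x < 2 * m) : Real.sin (π * x / m) < 0 := by
  have hm : (0:ℝ) < m := by nlinarith
  have h := sin_pos_of m (x - m) (by linarith) (by linarith)
  have e : π * x / m = π * (x - m) / m + π := by field_simp; ring
  rw [e, Real.sin_add_pi]
  linarith

lemma sin_pos_of' (m : ℕ) (x : ℝ) (h0 : -(2*(m:ℝ)) < x) (h1 : x < -(m:ℝ)) :
    0 < Real.sin (π * x / m) := by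
  have h := sin_neg_of' m (-x) (by linarith) (by linarith)
  rw [show π * x / m = -(π * (-x) / m) by ring, Real.sin_neg]
  linarith

lemma prod3_ppp {s1 s2 s3 : ℝ} (h1 : 0 < s1) (h2 : 0 < s2) (h3 : 0 < s3) :
    0 < 4 * s1 * s2 * s3 := by positivity

lemma prod3_pnn {s1 s2 s3 : ℝ} (h1 : 0 < s1) (h2 : s2 < 0) (h3 : s3 < 0) :
    0 < 4 * s1 * s2 * s3 := by
  have h23 : 0 < s2 * s3 := mul_pos_of_neg_of_neg h2 h3
  calc (0:ℝ) < (4*s1) * (s2*s3) := mul_pos (by linarith) h23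
  _ = 4*s1*s2*s3 := by ring

lemma prod3_ppn {s1 s2 s3 : ℝ} (h1 : 0 < s1) (h2 : 0 < s2) (h3 : s3 < 0) :
    4 * s1 * s2 * s3 < 0 :=
  mul_neg_of_pos_of_neg (by positivity) h3

lemma prod3_pnp {s1 s2 s3 : ℝ} (h1 : 0 < s1) (h2 : s2 < 0) (h3 : 0 < s3) :
    4 * s1 * s2 * s3 < 0 := by
  calc 4*s1*s2*s3 = (4*s1*s3)*s2 := by ring
  _ < 0 := mul_neg_of_pos_of_neg (by positivity) h2

lemma geom_main (n k l : ℕ) (hn : 2 ≤ n) (hk : k < 2*n+1) (hl : l < 2*n+1) (hkl : k < l) :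
    (openSegment ℝ (V (2*n+1) (k:ℤ)) (V (2*n+1) ((k:ℤ)+(n:ℤ))) ∩
     openSegment ℝ (V (2*n+1) (l:ℤ)) (V (2*n+1) ((l:ℤ)+(n:ℤ)))).Nonempty ↔
    (l - k ≠ n ∧ l - k ≠ n + 1) := by
  have hm : 0 < 2*n+1 := by omega
  have hn' : (2:ℝ) ≤ n := by exact_mod_cast hn
  have hk0 : (0:ℝ) ≤ k := Nat.cast_nonneg k
  have hl0 : (0:ℝ) ≤ l := Nat.cast_nonneg l
  have hk' : (k:ℝ) < 2*n+1 := by exact_mod_cast hk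
  have hl' : (l:ℝ) < 2*n+1 := by exact_mod_cast hl
  have hkl' : (k:ℝ) < l := by exact_mod_cast hkl
  constructor
  · rintro hne
    by_contra hcon
    rw [not_and_or] at hcon
    have : l = k + n ∨ l = k + n + 1 := by
      rcases hcon with h | h <;> [left; right] <;> omega
    rcases this with h | h
    · -- shared endpoint  B = C
      have e1 : (l:ℤ) = (k:ℤ) + n := by exact_mod_cast h
      rw [e1] at hne
      rw [seg_inter_empty₁ ?_] at hne
      · exact Set.not_nonempty_empty hne
      · rw [show ((k:ℤ)+(n:ℤ)) + n = ((k:ℤ)+2*n) by ring]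
        rw [crossV (2*n+1) hm (k:ℤ) ((k:ℤ)+n) ((k:ℤ)+n) ((k:ℤ)+2*n)]
        apply ne_of_gt
        apply prod3_ppp <;>
          first
            | (apply sin_pos_of <;> (push_cast; linarith))
            | (apply sin_neg_of <;> (push_cast; linarith))
            | (apply sin_neg_of' <;> (push_cast; linarith))
            | (apply sin_pos_of' <;> (push_cast; linarith))
    · -- shared endpoint  A = D
      have e1 : (l:ℤ) + n = (k:ℤ) + 1 * ((2*n+1 : ℕ) : ℤ) := by push_cast; omega
      rw [e1, V_add_int_mul (2*n+1) hm (k:ℤ) 1] at hne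
      rw [seg_inter_empty₂ ?_] at hne
      · exact Set.not_nonempty_empty hne
      · rw [crossV (2*n+1) hm (k:ℤ) ((k:ℤ)+n) (k:ℤ) (l:ℤ)]
        apply ne_of_gt
        have hl2 : (l:ℝ) = k + n + 1 := by exact_mod_cast h
        apply prod3_ppp <;>
          first
            | (apply sin_pos_of <;> (push_cast; linarith))
            | (apply sin_neg_of <;> (push_cast; linarith))
            | (apply sin_neg_of' <;> (push_cast; linarith))
            | (apply sin_pos_of' <;> (push_cast; linarith))
  · rintro ⟨hd1, hd2⟩
    have hcase : l < k + n ∨ k + n + 1 < l := by omega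
    apply seg_inter_nonempty
    · rw [crossV (2*n+1) hm (k:ℤ) ((k:ℤ)+n) (k:ℤ) (l:ℤ),
        crossV (2*n+1) hm (k:ℤ) ((k:ℤ)+n) (k:ℤ) ((l:ℤ)+n)]
      rcases hcase with hc | hc
      · have hc' : (l:ℝ) < k + n := by exact_mod_cast hc
        apply mul_neg_of_neg_of_pos
        · apply prod3_ppn <;>
            first
              | (apply sin_pos_of <;> (push_cast; linarith))
              | (apply sin_neg_of <;> (push_cast; linarith))
        · apply prod3_ppp <;>
            first
              | (apply sin_pos_of <;> (push_cast; linarith))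
      · have hc' : (k:ℝ) + n + 1 < l := by exact_mod_cast hc
        apply mul_neg_of_pos_of_neg
        · apply prod3_ppp <;>
            first
              | (apply sin_pos_of <;> (push_cast; linarith))
        · apply prod3_pnp <;>
            first
              | (apply sin_pos_of <;> (push_cast; linarith))
              | (apply sin_neg_of' <;> (push_cast; linarith))
    · rw [crossV (2*n+1) hm (l:ℤ) ((l:ℤ)+n) (l:ℤ) (k:ℤ),
        crossV (2*n+1) hm (l:ℤ) ((l:ℤ)+n) (l:ℤ) ((k:ℤ)+n)]
      rcases hcase with hc | hc
      · have hc' : (l:ℝ) < k + n := by exact_mod_cast hc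
        apply mul_neg_of_pos_of_neg
        · apply prod3_pnn <;>
            first
              | (apply sin_pos_of <;> (push_cast; linarith))
              | (apply sin_neg_of <;> (push_cast; linarith))
        · apply prod3_ppn <;>
            first
              | (apply sin_pos_of <;> (push_cast; linarith))
              | (apply sin_neg_of <;> (push_cast; linarith))
      · have hc' : (k:ℝ) + n + 1 < l := by exact_mod_cast hc
        apply mul_neg_of_neg_of_pos
        · apply prod3_pnp <;>
            first
              | (apply sin_pos_of <;> (push_cast; linarith))
              | (apply sin_neg_of <;> (push_cast; linarith))
              | (apply sin_pos_of' <;> (push_cast; linarith))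
        · apply prod3_pnn <;>
            first
              | (apply sin_pos_of <;> (push_cast; linarith))
              | (apply sin_neg_of <;> (push_cast; linarith))

lemma interleave_iff (n : ℕ) (hn : 2 ≤ n) (x y : ZMod (2*n+1)) :
    interleave (2*n+1) x (x + n) y (y + n) ↔
      ((y - x).val ≠ 0 ∧ (y - x).val ≠ n ∧ (y - x).val ≠ n + 1) := by
  haveI : NeZero (2*n+1) := ⟨by omega⟩
  have hnval : ((n : ZMod (2*n+1))).val = n := by
    rw [ZMod.val_natCast_of_lt (by omega)]
  have e1 : x + (n:ZMod (2*n+1)) - x = (n : ZMod (2*n+1)) := by ring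
  have e2 : y + (n:ZMod (2*n+1)) - x = (y - x) + n := by ring
  have hd : (y - x).val < 2*n+1 := ZMod.val_lt _
  have hvadd : ((y - x) + (n:ZMod (2*n+1))).val = ((y - x).val + n) % (2*n+1) := by
    rw [ZMod.val_add, hnval]
  unfold interleave arcMem
  rw [e1, e2, hnval, hvadd]
  set d := (y - x).val with hdd
  rcases Nat.lt_or_ge (d + n) (2*n+1) with h | h
  · rw [Nat.mod_eq_of_lt h]
    unfold Xor' Xor
    omega
  · rw [Nat.mod_eq_sub_mod h, Nat.mod_eq_of_lt (by omega)]
    unfold Xor' Xor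
    omega

lemma hval_lemma (n : ℕ) (i j : ℕ) (hij : i < j) (hj : j < 2*n+1) :
    (((j : ZMod (2*n+1)) - (i : ZMod (2*n+1))).val) = j - i := by
  haveI : NeZero (2*n+1) := ⟨by omega⟩
  rw [← Nat.cast_sub hij.le, ZMod.val_natCast_of_lt (by omega)]

lemma count_lemma (n : ℕ) (hn : 2 ≤ n) :
    ({p : Fin (2 * n + 1) × Fin (2 * n + 1) | p.1 < p.2 ∧
        interleave (2 * n + 1) (p.1.val : ZMod (2 * n + 1))
          ((p.1.val : ZMod (2 * n + 1)) + n)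
          (p.2.val : ZMod (2 * n + 1)) ((p.2.val : ZMod (2 * n + 1)) + n)}).ncard
      = (n - 1) * (2 * n + 1) := by
  haveI : NeZero (2*n+1) := ⟨by omega⟩
  classical
  set F : Finset (Fin (2*n+1) × Fin (2*n+1)) :=
    Finset.univ.filter (fun p => p.1.val < p.2.val ∧
      p.2.val - p.1.val ≠ n ∧ p.2.val - p.1.val ≠ n + 1) with hFdef
  have hS : ({p : Fin (2 * n + 1) × Fin (2 * n + 1) | p.1 < p.2 ∧
        interleave (2 * n + 1) (p.1.val : ZMod (2 * n + 1))
          ((p.1.val : ZMod (2 * n + 1)) + n)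
          (p.2.val : ZMod (2 * n + 1)) ((p.2.val : ZMod (2 * n + 1)) + n)} : Set _) = ↑F := by
    ext p
    simp only [Set.mem_setOf_eq, hFdef, Finset.coe_filter, Finset.mem_univ, true_and]
    constructor
    · rintro ⟨h1, h2⟩
      have h1' : p.1.val < p.2.val := h1
      rw [interleave_iff n hn, hval_lemma n _ _ h1' p.2.isLt] at h2
      exact ⟨h1', h2.2.1, h2.2.2⟩
    · rintro ⟨h1, h2, h3⟩
      refine ⟨h1, ?_⟩
      rw [interleave_iff n hn, hval_lemma n _ _ h1 p.2.isLt]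
      exact ⟨by omega, h2, h3⟩
  rw [hS, Set.ncard_coe_finset]
  -- fiberwise count
  have hfib : F.card = ∑ j : Fin (2*n+1),
      ((Finset.range j.val).filter (fun i => j.val - i ≠ n ∧ j.val - i ≠ n + 1)).card := by
    rw [Finset.card_eq_sum_card_fiberwise (f := Prod.snd) (t := Finset.univ)
      (fun x _ => Finset.mem_univ _)]
    apply Finset.sum_congr rfl
    intro j _
    apply Finset.card_bij (fun p _ => p.1.val)
    · rintro p hp
      simp only [hFdef, Finset.mem_filter, Finset.mem_univ, true_and] at hp
      obtain ⟨⟨h1, h2, h3⟩, h4⟩ := hp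
      subst h4
      simp only [Finset.mem_filter, Finset.mem_range]
      exact ⟨h1, h2, h3⟩
    · rintro p hp q hq hpq
      simp only [hFdef, Finset.mem_filter, Finset.mem_univ, true_and] at hp hq
      have : p.1 = q.1 := Fin.val_injective hpq
      exact Prod.ext this (hp.2.trans hq.2.symm)
    · rintro i hi
      simp only [Finset.mem_filter, Finset.mem_range] at hi
      refine ⟨(⟨i, lt_trans hi.1 j.isLt⟩, j), ?_, rfl⟩
      simp only [hFdef, Finset.mem_filter, Finset.mem_univ, true_and]
      exact ⟨⟨hi.1, hi.2.1, hi.2.2⟩, trivial⟩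
  rw [hfib, Fin.sum_univ_eq_sum_range
    (fun j => ((Finset.range j).filter (fun i => j - i ≠ n ∧ j - i ≠ n + 1)).card)]
  -- pointwise: c j + r j = j
  have hc : ∀ j, j < 2*n+1 →
      ((Finset.range j).filter (fun i => j - i ≠ n ∧ j - i ≠ n + 1)).card
        + ((if n ≤ j then 1 else 0) + (if n + 1 ≤ j then 1 else 0)) = j := by
    intro j hj
    rcases Nat.lt_or_ge j n with h | h
    · rw [Finset.filter_true_of_mem (fun i hi => by
        simp only [Finset.mem_range] at hi; omega)]
      rw [Finset.card_range, if_neg (by omega), if_neg (by omega)]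
      omega
    rcases Nat.eq_or_lt_of_le h with h' | h'
    · have he : (Finset.range j).filter (fun i => j - i ≠ n ∧ j - i ≠ n + 1)
          = (Finset.range j).erase 0 := by
        ext i
        simp only [Finset.mem_filter, Finset.mem_erase, Finset.mem_range]
        omega
      rw [he, Finset.card_erase_of_mem (by simp only [Finset.mem_range]; omega),
        Finset.card_range, if_pos (by omega), if_neg (by omega)]
      omega
    · have he : (Finset.range j).filter (fun i => j - i ≠ n ∧ j - i ≠ n + 1)
          = ((Finset.range j).erase (j - n)).erase (j - n - 1) := by
        ext i
        simp only [Finset.mem_filter, Finset.mem_erase, Finset.mem_range]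
        omega
      rw [he, Finset.card_erase_of_mem (by
          simp only [Finset.mem_erase, Finset.mem_range]; omega),
        Finset.card_erase_of_mem (by simp only [Finset.mem_range]; omega),
        Finset.card_range, if_pos (by omega), if_pos (by omega)]
      omega
  have hsum : (∑ j ∈ Finset.range (2*n+1),
      ((Finset.range j).filter (fun i => j - i ≠ n ∧ j - i ≠ n + 1)).card)
      + (∑ j ∈ Finset.range (2*n+1), ((if n ≤ j then 1 else 0) + (if n + 1 ≤ j then 1 else 0)))
      = ∑ j ∈ Finset.range (2*n+1), j := by
    rw [← Finset.sum_add_distrib]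
    apply Finset.sum_congr rfl
    intro j hj
    exact hc j (Finset.mem_range.mp hj)
  have hr1 : (∑ j ∈ Finset.range (2*n+1), (if n ≤ j then 1 else 0)) = n + 1 := by
    rw [Finset.sum_boole]
    have : (Finset.range (2*n+1)).filter (fun j => n ≤ j) = Finset.Ico n (2*n+1) := by
      ext j
      simp only [Finset.mem_filter, Finset.mem_range, Finset.mem_Ico]
      omega
    rw [this, Nat.card_Ico]
    simp
    omega
  have hr2 : (∑ j ∈ Finset.range (2*n+1), (if n + 1 ≤ j then 1 else 0)) = n := by
    rw [Finset.sum_boole]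
    have : (Finset.range (2*n+1)).filter (fun j => n + 1 ≤ j) = Finset.Ico (n+1) (2*n+1) := by
      ext j
      simp only [Finset.mem_filter, Finset.mem_range, Finset.mem_Ico]
      omega
    rw [this, Nat.card_Ico]
    simp
    omega
  rw [Finset.sum_add_distrib, hr1, hr2] at hsum
  have hG := Finset.sum_range_id_mul_two (2*n+1)
  have he : (2*n+1) * (2*n+1-1) = ((n-1)*(2*n+1) + (n+1) + n) * 2 := by
    obtain ⟨p, rfl⟩ : ∃ p, n = p + 2 := ⟨n - 2, by omega⟩
    rw [show 2*(p+2)+1-1 = 2*(p+2) from rfl, show p+2-1 = p+1 from rfl]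
    ring
  rw [he] at hG
  omega


/-- Two distinct chords of the `(2n+1)`-star, joining vertex `k` to vertex `k+n`
(mod `2n+1`), meet in the interior of the disk iff their endpoint pairs interleave
on the circle; and the number of pairs `(i,j)`, `0 ≤ i < j ≤ 2n`, whose cyclic pairs
`{i, i+n}` and `{j, j+n}` (mod `2n+1`) interleave equals `(n-1)(2n+1)`. -/
theorem stmt_5 (n : ℕ) (hn : 2 ≤ n) :
    (∀ k l : ℕ, k < 2 * n + 1 → l < 2 * n + 1 → k ≠ l →
      ((openSegment ℝ (starVertex n k) (starVertex n ((k + n) % (2 * n + 1))) ∩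
        openSegment ℝ (starVertex n l) (starVertex n ((l + n) % (2 * n + 1)))).Nonempty ↔
        interleave (2 * n + 1) (k : ZMod (2 * n + 1)) ((k : ZMod (2 * n + 1)) + n)
          (l : ZMod (2 * n + 1)) ((l : ZMod (2 * n + 1)) + n))) ∧
    ({p : Fin (2 * n + 1) × Fin (2 * n + 1) | p.1 < p.2 ∧
        interleave (2 * n + 1) (p.1.val : ZMod (2 * n + 1))
          ((p.1.val : ZMod (2 * n + 1)) + n)
          (p.2.val : ZMod (2 * n + 1)) ((p.2.val : ZMod (2 * n + 1)) + n)}).ncard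
      = (n - 1) * (2 * n + 1) := by
  haveI : NeZero (2*n+1) := ⟨by omega⟩
  refine ⟨?_, count_lemma n hn⟩
  intro k l hk hl hne
  have hm : 0 < 2*n+1 := by omega
  have hmod : ∀ j : ℕ, V (2*n+1) ((j % (2*n+1) : ℕ) : ℤ) = V (2*n+1) (j : ℤ) := by
    intro j
    conv_rhs => rw [show (j:ℤ) = ((j % (2*n+1) : ℕ) : ℤ) + (j / (2*n+1) : ℕ) * ((2*n+1 : ℕ):ℤ) by
      exact_mod_cast (Nat.mod_add_div' j (2*n+1)).symm]
    rw [V_add_int_mul _ hm]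
  have eB : ∀ j : ℕ, starVertex n ((j + n) % (2*n+1)) = V (2*n+1) ((j:ℤ)+(n:ℤ)) := by
    intro j
    rw [starVertex_eq, hmod (j+n)]
    norm_cast
  rw [starVertex_eq n k, starVertex_eq n l, eB k, eB l]
  rcases Nat.lt_or_ge k l with hkl | hge
  · rw [geom_main n k l hn hk hl hkl, interleave_iff n hn, hval_lemma n k l hkl hl]
    omega
  · have hlk : l < k := by omega
    rw [Set.inter_comm, geom_main n l k hn hl hk hlk, interleave_iff n hn]
    have hsub : ((l : ZMod (2*n+1)) - (k : ZMod (2*n+1))) = ((l + (2*n+1) - k : ℕ) : ZMod (2*n+1)) := by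
      rw [Nat.cast_sub (by omega), Nat.cast_add, ZMod.natCast_self]
      ring
    rw [hsub, ZMod.val_natCast_of_lt (by omega)]
    omega
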